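/- arXiv:2412.03290 — 3 statements merged into one kernel-verified Lean document; each statement's English description precedes it below -/
import Mathlib

section
/- For complex parameters with Re(c) > Re(b) > 0 and |z| < 1, the Gauss hypergeometric function satisfies the Euler integral representation: ₂F₁(a,b;c|z) = Γ(c)/(Γ(b)Γ(c−b)) · ∫₀¹ u^{b−1}(1−u)^{c−b−1}(1−zu)^{−a} du. -/
open scoped Topology

/-- Pochhammer symbol `(p)_k` over `ℂ`. -/
noncomputable def pochC (p : ℂ) (k : ℕ) : ℂ := (ascPochhammer ℂ k).eval p

/-- Gauss hypergeometric series `₂F₁(a,b;c|z)`. -/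
noncomputable def hyp2F1 (a b c z : ℂ) : ℂ :=
  ∑' k : ℕ, pochC a k * pochC b k / (pochC c k * (k.factorial : ℂ)) * z ^ k

open Complex MeasureTheory Filter Topology

noncomputable def pochR (x : ℝ) (k : ℕ) : ℝ := (ascPochhammer ℝ k).eval x

lemma pochC_zero (a : ℂ) : pochC a 0 = 1 := by simp [pochC]
lemma pochC_succ (a : ℂ) (k : ℕ) : pochC a (k+1) = pochC a k * (a + k) := by
  simp [pochC, ascPochhammer_succ_eval]
lemma pochR_zero (x : ℝ) : pochR x 0 = 1 := by simp [pochR]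
lemma pochR_succ (x : ℝ) (k : ℕ) : pochR x (k+1) = pochR x k * (x + k) := by
  simp [pochR, ascPochhammer_succ_eval]
lemma pochR_pos {x : ℝ} (hx : 0 < x) (k : ℕ) : 0 < pochR x k := by
  induction k with
  | zero => simp [pochR_zero]
  | succ n ih => rw [pochR_succ]; positivity
lemma norm_pochC_le (a : ℂ) (k : ℕ) : ‖pochC a k‖ ≤ pochR (‖a‖ + 1) k := by
  induction k with
  | zero => simp [pochC_zero, pochR_zero]
  | succ n ih =>
    rw [pochC_succ, pochR_succ, norm_mul]
    have h1 : ‖a + (n:ℂ)‖ ≤ ‖a‖ + 1 + n := by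
      calc ‖a + (n:ℂ)‖ ≤ ‖a‖ + ‖(n:ℂ)‖ := norm_add_le _ _
      _ ≤ ‖a‖ + 1 + n := by simp
    exact mul_le_mul ih h1 (norm_nonneg _) (le_of_lt (pochR_pos (by positivity) n))
lemma pochC_ne_zero {c : ℂ} (hc : ∀ n : ℕ, c ≠ -(n:ℂ)) (k : ℕ) : pochC c k ≠ 0 := by
  induction k with
  | zero => simp [pochC_zero]
  | succ n ih =>
    rw [pochC_succ]
    refine mul_ne_zero ih ?_
    intro h
    exact hc n (by linear_combination h)

lemma summable_master {A r : ℝ} (hA : 0 < A) (hr0 : 0 < r) (hr1 : r < 1) :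
    Summable (fun k : ℕ => pochR A k * (k+1) * r^k / k.factorial) := by
  set f : ℕ → ℝ := fun k => pochR A k * (k+1) * r^k / k.factorial with hf
  have hpos : ∀ k, 0 < f k := by
    intro k
    have := pochR_pos hA k
    have := Nat.factorial_pos k
    positivity
  apply summable_of_ratio_test_tendsto_lt_one hr1
    (Filter.Eventually.of_forall fun n => (hpos n).ne')
  have key : ∀ n : ℕ, ‖f (n+1)‖ / ‖f n‖ =
      ((A - 1) * (1/((n:ℝ)+1)) + 1) * ((1/((n:ℝ)+1)) + 1) * r := by
    intro n
    rw [Real.norm_of_nonneg (hpos (n+1)).le, Real.norm_of_nonneg (hpos n).le]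
    rw [hf]
    simp only
    rw [pochR_succ, Nat.factorial_succ]
    have h1 : pochR A n ≠ 0 := (pochR_pos hA n).ne'
    have h2 : (n.factorial : ℝ) ≠ 0 := Nat.cast_ne_zero.mpr (Nat.factorial_pos n).ne'
    have h3 : ((n:ℝ)+1) ≠ 0 := by positivity
    have h4 : r ^ n ≠ 0 := pow_ne_zero _ hr0.ne'
    field_simp
    push_cast
    ring
  rw [show (𝓝 r) = 𝓝 (((A-1) * 0 + 1) * (0 + 1) * r) by norm_num]
  simp only [key]
  exact ((((tendsto_const_nhds.mul tendsto_one_div_add_atTop_nhds_zero_nat).add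
    tendsto_const_nhds).mul (tendsto_one_div_add_atTop_nhds_zero_nat.add
    tendsto_const_nhds)).mul tendsto_const_nhds)

lemma summable_aux0 {A r : ℝ} (hA : 0 < A) (hr0 : 0 ≤ r) (hr1 : r < 1) :
    Summable (fun k : ℕ => pochR A k * r^k / k.factorial) := by
  set r' : ℝ := (r+1)/2 with hr'
  have h0 : 0 < r' := by rw [hr']; linarith
  have h1 : r' < 1 := by rw [hr']; linarith
  have hle : r ≤ r' := by rw [hr']; linarith
  refine Summable.of_nonneg_of_le (fun k => ?_) (fun k => ?_) (summable_master hA h0 h1)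
  · have := pochR_pos hA k; have := Nat.factorial_pos k; positivity
  · have hp := (pochR_pos hA k).le
    have hfac : (0:ℝ) < k.factorial := Nat.cast_pos.mpr (Nat.factorial_pos k)
    apply div_le_div_of_nonneg_right ?_ hfac.le |>.trans_eq rfl
    calc pochR A k * r ^ k ≤ pochR A k * r' ^ k := by
          exact mul_le_mul_of_nonneg_left (pow_le_pow_left₀ hr0 hle k) hp
    _ ≤ pochR A k * (k+1) * r' ^ k := by
          nlinarith [mul_nonneg (mul_nonneg hp (pow_pos h0 k).le) (Nat.cast_nonneg (α := ℝ) k)]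

lemma summable_deriv_bound {A r : ℝ} (hA : 0 < A) (hr0 : 0 < r) (hr1 : r < 1) :
    Summable (fun k : ℕ => pochR A k * k * r^(k-1) / k.factorial) := by
  refine Summable.of_nonneg_of_le (fun k => ?_) (fun k => ?_)
    ((summable_master hA hr0 hr1).mul_right (1/r))
  · have := pochR_pos hA k; have := Nat.factorial_pos k; positivity
  · have hp := (pochR_pos hA k).le
    have hfac : (0:ℝ) < k.factorial := Nat.cast_pos.mpr (Nat.factorial_pos k)
    rw [div_mul_eq_mul_div]
    apply div_le_div_of_nonneg_right ?_ hfac.le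
    match k with
    | 0 => simp; positivity
    | (n+1) =>
      have h1 : (n+1:ℕ) - 1 = n := rfl
      rw [h1]
      have h2 : r ^ n = r ^ (n+1) * (1/r) := by
        field_simp
        rw [pow_succ]
      rw [h2]
      have : ((n+1:ℕ):ℝ) ≤ ((n:ℝ)+1+1) := by push_cast; linarith
      have h3 : (0:ℝ) < r ^ (n+1) * (1/r) := by positivity
      push_cast
      nlinarith [pow_pos hr0 (n+1), mul_pos (pow_pos hr0 (n+1)) (one_div_pos.mpr hr0)]

lemma summable_binom (a : ℂ) {v : ℂ} (hv : ‖v‖ < 1) :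
    Summable (fun k : ℕ => pochC a k / (k.factorial : ℂ) * v ^ k) := by
  refine Summable.of_norm_bounded (summable_aux0 (A := ‖a‖+1) (by positivity)
    (norm_nonneg v) hv) (fun k => ?_)
  rw [norm_mul, norm_div, norm_pow]
  have h1 : ‖((k.factorial : ℂ))‖ = (k.factorial : ℝ) := by
    rw [Complex.norm_natCast]
  rw [h1, div_mul_eq_mul_div]
  apply div_le_div_of_nonneg_right ?_ (Nat.cast_pos.mpr (Nat.factorial_pos k)).le
  exact mul_le_mul_of_nonneg_right (norm_pochC_le a k) (pow_nonneg (norm_nonneg v) k)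

lemma summable_binom_deriv (a : ℂ) {z : ℂ} {r : ℝ} (hz : ‖z‖ ≤ r) (hr0 : 0 < r) (hr1 : r < 1) :
    Summable (fun k : ℕ => pochC a k / (k.factorial : ℂ) * ((k : ℂ) * z ^ (k-1))) := by
  refine Summable.of_norm_bounded (summable_deriv_bound (A := ‖a‖+1) (by positivity) hr0 hr1)
    (fun k => ?_)
  rw [norm_mul, norm_div, norm_mul, norm_pow, Complex.norm_natCast, Complex.norm_natCast]
  have h2 : ‖z‖ ^ (k-1) ≤ r ^ (k-1) := pow_le_pow_left₀ (norm_nonneg z) hz _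
  have h3 := norm_pochC_le a k
  have hre : pochR (‖a‖+1) k * (k:ℝ) * r^(k-1) / (k.factorial : ℝ)
      = pochR (‖a‖+1) k / (k.factorial : ℝ) * ((k:ℝ) * r^(k-1)) := by ring
  rw [hre]
  gcongr
  all_goals first
    | exact div_nonneg (pochR_pos (x := ‖a‖+1) (by positivity) _).le (Nat.cast_nonneg _)
    | exact h3
    | exact h2

lemma hasSum_binom (a : ℂ) {w : ℂ} (hw : ‖w‖ < 1) :
    HasSum (fun k : ℕ => pochC a k / (k.factorial : ℂ) * w ^ k) ((1 - w) ^ (-a)) := by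
  set c : ℕ → ℂ := fun k => pochC a k / (k.factorial : ℂ) with hc
  set g : ℂ → ℂ := fun z => ∑' k : ℕ, c k * z ^ k with hgdef
  set S : ℂ → ℂ := fun z => ∑' k : ℕ, c k * ((k : ℂ) * z ^ (k-1)) with hSdef
  -- derivative of g on the unit ball
  have hderiv : ∀ z : ℂ, ‖z‖ < 1 → HasDerivAt g (S z) z := by
    intro z hz
    set r : ℝ := (‖z‖ + 1) / 2 with hr
    have hr0 : 0 < r := by rw [hr]; positivity
    have hr1 : r < 1 := by rw [hr]; linarith
    have hzr : ‖z‖ < r := by rw [hr]; linarith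
    have := hasDerivAt_tsum_of_isPreconnected
      (u := fun k : ℕ => pochR (‖a‖+1) k * k * r^(k-1) / k.factorial)
      (g := fun k y => c k * y ^ k) (g' := fun k y => c k * ((k:ℂ) * y ^ (k-1)))
      (t := Metric.ball (0:ℂ) r) (y₀ := 0) (y := z)
      (summable_deriv_bound (by positivity) hr0 hr1)
      Metric.isOpen_ball (convex_ball _ _).isPreconnected
      (fun n y _ => (hasDerivAt_pow n y).const_mul (c n))
      ?_ (by simpa using hr0) ?_ (by simpa using hzr)
    · exact this
    · intro n y hy
      have hyr : ‖y‖ ≤ r := by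
        simpa using (Metric.mem_ball.mp hy).le
      rw [norm_mul, norm_mul, norm_pow, Complex.norm_natCast, hc]
      simp only [norm_div, Complex.norm_natCast]
      have h2 : ‖y‖ ^ (n-1) ≤ r ^ (n-1) := pow_le_pow_left₀ (norm_nonneg y) hyr _
      have h3 := norm_pochC_le a n
      have hre : pochR (‖a‖+1) n * (n:ℝ) * r^(n-1) / (n.factorial : ℝ)
          = pochR (‖a‖+1) n / (n.factorial : ℝ) * ((n:ℝ) * r^(n-1)) := by ring
      rw [hre]
      gcongr
      all_goals first
        | exact div_nonneg (pochR_pos (x := ‖a‖+1) (by positivity) _).le (Nat.cast_nonneg _)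
        | exact h3
        | exact h2
    · exact summable_binom a (by simp)
  -- the key ODE identity
  have hkey : ∀ z : ℂ, ‖z‖ < 1 → (1 - z) * S z = a * g z := by
    intro z hz
    have hsum : Summable (fun k : ℕ => c k * ((k:ℂ) * z ^ (k-1))) := by
      refine summable_binom_deriv a (r := (‖z‖+1)/2) (by linarith) (by positivity) (by linarith)
    have hT : HasSum (fun k : ℕ => c k * ((k:ℂ) * z ^ (k-1))) (S z) := hsum.hasSum
    have h1 : HasSum (fun k : ℕ => c (k+1) * (((k:ℂ)+1) * z ^ k)) (S z) := by
      have := (hasSum_nat_add_iff' (f := fun k : ℕ => c k * ((k:ℂ) * z ^ (k-1))) 1).mpr hT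
      simp only [Finset.range_one, Finset.sum_singleton, Nat.cast_zero, zero_mul,
        mul_zero, sub_zero] at this
      refine this.congr_fun fun k => ?_
      push_cast
      ring_nf
    have h1' : HasSum (fun k : ℕ => c k * ((a + k) * z ^ k)) (S z) := by
      refine h1.congr_fun fun k => ?_
      have hfac : ((k.factorial : ℂ)) ≠ 0 := Nat.cast_ne_zero.mpr (Nat.factorial_pos k).ne'
      have hk1 : ((k:ℂ) + 1) ≠ 0 := by
        have : (((k+1 : ℕ)) : ℂ) ≠ 0 := Nat.cast_ne_zero.mpr (Nat.succ_ne_zero k)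
        push_cast at this
        exact this
      rw [hc]
      simp only
      rw [pochC_succ, Nat.factorial_succ]
      push_cast
      field_simp
    have h2 : HasSum (fun k : ℕ => c k * ((k:ℂ) * z ^ k)) (z * S z) := by
      refine (hT.mul_left z).congr_fun fun k => ?_
      match k with
      | 0 => simp
      | (n+1) =>
        have : (n+1) - 1 = n := rfl
        rw [this, pow_succ]
        ring
    have h3 := h1'.sub h2
    have h4 : HasSum (fun k : ℕ => a * (c k * z ^ k)) (S z - z * S z) := by
      refine h3.congr_fun fun k => ?_
      ring
    have h5 : HasSum (fun k : ℕ => a * (c k * z ^ k)) (a * g z) :=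
      (summable_binom a hz).hasSum.mul_left a
    have := h4.unique h5
    rw [← this]; ring
  -- F is constant on the ball
  have hne : ∀ z : ℂ, ‖z‖ < 1 → (1 - z) ≠ 0 := by
    intro z hz h
    have : z = 1 := by linear_combination -h
    rw [this] at hz; simp at hz
  have hre : ∀ z : ℂ, ‖z‖ < 1 → 0 < (1 - z).re := by
    intro z hz
    have := Complex.re_le_norm z
    rw [Complex.sub_re, Complex.one_re]
    have : z.re < 1 := lt_of_le_of_lt (by simpa using this) hz
    linarith
  set F : ℂ → ℂ := fun z => (1 - z) ^ a * g z with hF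
  have hFderiv : ∀ z ∈ Metric.ball (0:ℂ) 1, HasDerivAt F 0 z := by
    intro z hz
    rw [Metric.mem_ball, dist_zero_right] at hz
    have hf1 : HasDerivAt (fun z : ℂ => (1 - z)) (-1) z := by
      simpa using (hasDerivAt_id z).const_sub 1
    have hf2 : HasDerivAt (fun z : ℂ => (1 - z) ^ a) (a * (1 - z) ^ (a - 1) * (-1)) z :=
      hf1.cpow_const (Or.inl (hre z hz))
    have := hf2.mul (hderiv z hz)
    refine this.congr_deriv (Eq.symm ?_)
    have hsplit : (1 - z) ^ a = (1 - z) ^ (a - 1) * (1 - z) := by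
      conv_lhs => rw [show a = (a - 1) + 1 by ring]
      rw [Complex.cpow_add _ _ (hne z hz), Complex.cpow_one]
    rw [hsplit]
    have := hkey z hz
    linear_combination (-(1 - z : ℂ) ^ (a-1)) * this
  have hconst : F w = F 0 := by
    have hmap : (ContinuousLinearMap.smulRight (1 : ℂ →L[ℂ] ℂ) (0:ℂ)) = 0 := by
      ext : 1
      simp
    have key := Convex.norm_image_sub_le_of_norm_hasFDerivWithin_le
      (f := F) (f' := fun _ => (0 : ℂ →L[ℂ] ℂ)) (C := 0) (s := Metric.ball (0:ℂ) 1)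
      (fun x hx => by
        have := (hFderiv x hx).hasFDerivAt
        rw [ContinuousLinearMap.toSpanSingleton_zero] at this
        exact this.hasFDerivWithinAt)
      (fun x _ => by simp) (convex_ball _ _)
      (show (0:ℂ) ∈ Metric.ball (0:ℂ) 1 from Metric.mem_ball_self one_pos)
      (show w ∈ Metric.ball (0:ℂ) 1 from by
        simpa [Metric.mem_ball, dist_zero_right] using hw)
    have : ‖F w - F 0‖ ≤ 0 := by simpa using key
    have := le_antisymm this (norm_nonneg _)
    rwa [norm_eq_zero, sub_eq_zero] at this
  have hg0 : g 0 = 1 := by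
    rw [hgdef]
    simp only
    rw [tsum_eq_single 0 (fun k hk => by simp [zero_pow hk])]
    simp [hc, pochC_zero]
  have hF0 : F 0 = 1 := by
    rw [hF]; simp only [sub_zero, Complex.one_cpow, hg0, mul_one]
  have hgw : (1 - w) ^ a * g w = 1 := hconst.trans hF0
  have hgweq : g w = (1 - w) ^ (-a) := by
    rw [Complex.cpow_neg]
    exact (inv_eq_of_mul_eq_one_right hgw).symm
  have := (summable_binom a hw).hasSum
  rw [← hgweq]
  exact this

lemma Gamma_add_nat {b : ℂ} (hb : 0 < b.re) (k : ℕ) :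
    Complex.Gamma (b + k) = pochC b k * Complex.Gamma b := by
  induction k with
  | zero => simp [pochC_zero]
  | succ n ih =>
    have hne : b + n ≠ 0 := by
      intro h
      have := congrArg Complex.re h
      simp [Complex.add_re, Complex.natCast_re] at this
      have : (0:ℝ) ≤ (n:ℝ) := Nat.cast_nonneg n
      linarith
    have : (b + ((n+1 : ℕ) : ℂ)) = (b + n) + 1 := by push_cast; ring
    rw [this, Complex.Gamma_add_one _ hne, ih, pochC_succ]
    ring

lemma summable_binom_norm (a : ℂ) {v : ℂ} (hv : ‖v‖ < 1) :
    Summable (fun k : ℕ => ‖pochC a k / (k.factorial : ℂ) * v ^ k‖) := by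
  refine Summable.of_nonneg_of_le (fun k => norm_nonneg _) (fun k => ?_)
    (summable_aux0 (A := ‖a‖+1) (by positivity) (norm_nonneg v) hv)
  rw [norm_mul, norm_div, norm_pow, Complex.norm_natCast, div_mul_eq_mul_div]
  apply div_le_div_of_nonneg_right ?_ (Nat.cast_pos.mpr (Nat.factorial_pos k)).le
  exact mul_le_mul_of_nonneg_right (norm_pochC_le a k) (pow_nonneg (norm_nonneg v) k)

/-- Euler integral representation of the Gauss hypergeometric function. -/
theorem euler_integral_repr (a b c z : ℂ)
    (hb : 0 < b.re) (hbc : b.re < c.re)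
    (hc : ∀ n : ℕ, c ≠ -(n : ℂ))
    (hz : ‖z‖ < 1) :
    hyp2F1 a b c z =
      Complex.Gamma c / (Complex.Gamma b * Complex.Gamma (c - b)) *
        ∫ u in (0:ℝ)..1, (u : ℂ) ^ (b - 1) * ((1 : ℂ) - (u : ℂ)) ^ (c - b - 1) *
          ((1 : ℂ) - z * (u : ℂ)) ^ (-a) := by
  have hcb : 0 < (c - b).re := by rw [Complex.sub_re]; linarith
  have hcre : 0 < c.re := lt_trans hb hbc
  set K : ℂ := Complex.Gamma c / (Complex.Gamma b * Complex.Gamma (c - b)) with hK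
  set G : ℕ → ℝ → ℂ := fun k u =>
    (pochC a k / (k.factorial : ℂ) * z ^ k) *
      ((u : ℂ) ^ (b + k - 1) * ((1 : ℂ) - (u : ℂ)) ^ (c - b - 1)) with hG
  have hbk : ∀ k : ℕ, 0 < (b + k).re := by
    intro k
    rw [Complex.add_re, Complex.natCast_re]
    have : (0:ℝ) ≤ (k:ℝ) := Nat.cast_nonneg k
    linarith
  -- integrability of each G k
  have hGint : ∀ k : ℕ, MeasureTheory.IntegrableOn (G k) (Set.Ioc (0:ℝ) 1) := by
    intro k
    have h1 := Complex.betaIntegral_convergent (hbk k) hcb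
    rw [intervalIntegrable_iff, Set.uIoc_of_le zero_le_one] at h1
    exact h1.const_mul _
  -- bound on the norm integrals
  set base : ℝ → ℂ := fun u => (u : ℂ) ^ (b - 1) * ((1 : ℂ) - (u : ℂ)) ^ (c - b - 1) with hbase
  have hbase_int : MeasureTheory.IntegrableOn base (Set.Ioc (0:ℝ) 1) := by
    have h1 := Complex.betaIntegral_convergent hb hcb
    rw [intervalIntegrable_iff, Set.uIoc_of_le zero_le_one] at h1
    exact h1
  have hnorm_bound : ∀ k : ℕ, ∀ u ∈ Set.Ioc (0:ℝ) 1,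
      ‖G k u‖ ≤ ‖pochC a k / (k.factorial : ℂ) * z ^ k‖ * ‖base u‖ := by
    intro k u hu
    obtain ⟨hu0, hu1⟩ := hu
    rw [hG, hbase]
    simp only [norm_mul]
    have hkey : ‖(u:ℂ) ^ (b + k - 1)‖ ≤ ‖(u:ℂ) ^ (b - 1)‖ := by
      rw [Complex.norm_cpow_eq_rpow_re_of_pos hu0, Complex.norm_cpow_eq_rpow_re_of_pos hu0]
      apply Real.rpow_le_rpow_of_exponent_ge hu0 hu1
      simp only [Complex.sub_re, Complex.add_re, Complex.one_re, Complex.natCast_re]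
      have : (0:ℝ) ≤ (k:ℝ) := Nat.cast_nonneg k
      linarith
    gcongr
  set C : ℝ := ∫ u in Set.Ioc (0:ℝ) 1, ‖base u‖ with hCdef
  have hsum_int : Summable (fun k : ℕ => ∫ u in Set.Ioc (0:ℝ) 1, ‖G k u‖) := by
    refine Summable.of_nonneg_of_le
      (fun k => MeasureTheory.integral_nonneg (fun u => norm_nonneg _)) (fun k => ?_)
      ((summable_binom_norm a hz).mul_right C)
    calc ∫ u in Set.Ioc (0:ℝ) 1, ‖G k u‖
        ≤ ∫ u in Set.Ioc (0:ℝ) 1, ‖pochC a k / (k.factorial : ℂ) * z ^ k‖ * ‖base u‖ :=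
          MeasureTheory.setIntegral_mono_on (hGint k).norm (hbase_int.norm.const_mul _)
            measurableSet_Ioc (hnorm_bound k)
    _ = ‖pochC a k / (k.factorial : ℂ) * z ^ k‖ * C := by
          rw [MeasureTheory.integral_const_mul]
  have hinterchange := MeasureTheory.hasSum_integral_of_summable_integral_norm
    (μ := MeasureTheory.volume.restrict (Set.Ioc (0:ℝ) 1)) (F := G) hGint hsum_int
  have htsum : ∀ u ∈ Set.Ioc (0:ℝ) 1,
      (∑' k : ℕ, G k u) = base u * ((1:ℂ) - z * u) ^ (-a) := by
    intro u hu
    obtain ⟨hu0, hu1⟩ := hu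
    have hune : (u:ℂ) ≠ 0 := by exact_mod_cast hu0.ne'
    have hzu : ‖z * (u:ℂ)‖ < 1 := by
      rw [norm_mul, Complex.norm_real]
      rw [Real.norm_of_nonneg hu0.le]
      calc ‖z‖ * u ≤ ‖z‖ * 1 := by gcongr
      _ < 1 := by rwa [mul_one]
    have hbin := (hasSum_binom a hzu).mul_left (base u)
    rw [← hbin.tsum_eq]
    apply tsum_congr
    intro k
    rw [hG, hbase]
    simp only
    have hsplit : (u:ℂ) ^ (b + k - 1) = (u:ℂ) ^ (b - 1) * (u:ℂ) ^ (k:ℕ) := by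
      rw [show b + (k:ℂ) - 1 = (b - 1) + ((k:ℕ):ℂ) by push_cast; ring,
        Complex.cpow_add _ _ hune, Complex.cpow_natCast]
    rw [hsplit, mul_pow]
    ring
  have hIoc : (∫ u in Set.Ioc (0:ℝ) 1, (∑' k : ℕ, G k u))
      = ∫ u in Set.Ioc (0:ℝ) 1,
          (u : ℂ) ^ (b - 1) * ((1 : ℂ) - (u : ℂ)) ^ (c - b - 1) * ((1:ℂ) - z * u) ^ (-a) :=
    MeasureTheory.setIntegral_congr_fun measurableSet_Ioc htsum
  have hbeta : ∀ k : ℕ, (∫ u in Set.Ioc (0:ℝ) 1, G k u)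
      = (pochC a k / (k.factorial : ℂ) * z ^ k) *
        (Complex.Gamma (b + k) * Complex.Gamma (c - b) / Complex.Gamma (c + k)) := by
    intro k
    have h1 : (∫ u in Set.Ioc (0:ℝ) 1, G k u)
        = (pochC a k / (k.factorial : ℂ) * z ^ k) * Complex.betaIntegral (b + k) (c - b) := by
      rw [hG]
      simp only
      rw [MeasureTheory.integral_const_mul]
      congr 1
      rw [Complex.betaIntegral, intervalIntegral.integral_of_le zero_le_one]
    have h2 := Complex.Gamma_mul_Gamma_eq_betaIntegral (hbk k) hcb
    rw [show b + k + (c - b) = c + k by ring] at h2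
    have h4 : Complex.Gamma (c + k) ≠ 0 := by
      apply Complex.Gamma_ne_zero_of_re_pos
      rw [Complex.add_re, Complex.natCast_re]
      have : (0:ℝ) ≤ (k:ℝ) := Nat.cast_nonneg k
      linarith
    rw [h1]
    congr 1
    rw [eq_div_iff h4]
    linear_combination -h2
  have hterm : ∀ k : ℕ, pochC a k * pochC b k / (pochC c k * (k.factorial : ℂ)) * z ^ k
      = K * ((pochC a k / (k.factorial : ℂ) * z ^ k) *
        (Complex.Gamma (b + k) * Complex.Gamma (c - b) / Complex.Gamma (c + k))) := by
    intro k
    rw [hK, Gamma_add_nat hb k, Gamma_add_nat hcre k]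
    have h4 : pochC c k ≠ 0 := pochC_ne_zero hc k
    have h5 : Complex.Gamma b ≠ 0 := Complex.Gamma_ne_zero_of_re_pos hb
    have h6 : Complex.Gamma c ≠ 0 := Complex.Gamma_ne_zero_of_re_pos hcre
    have h7 : Complex.Gamma (c - b) ≠ 0 := Complex.Gamma_ne_zero_of_re_pos hcb
    have h8 : (k.factorial : ℂ) ≠ 0 := Nat.cast_ne_zero.mpr (Nat.factorial_pos k).ne'
    field_simp
    done
  rw [hyp2F1]
  calc (∑' k : ℕ, pochC a k * pochC b k / (pochC c k * (k.factorial : ℂ)) * z ^ k)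
      = ∑' k : ℕ, K * (∫ u in Set.Ioc (0:ℝ) 1, G k u) := by
        apply tsum_congr
        intro k
        rw [hterm k, hbeta k]
  _ = K * ∑' k : ℕ, (∫ u in Set.Ioc (0:ℝ) 1, G k u) := tsum_mul_left
  _ = K * ∫ u in Set.Ioc (0:ℝ) 1, (∑' k : ℕ, G k u) := by rw [hinterchange.tsum_eq]
  _ = K * ∫ u in (0:ℝ)..1, (u : ℂ) ^ (b - 1) * ((1 : ℂ) - (u : ℂ)) ^ (c - b - 1) *
        ((1 : ℂ) - z * (u : ℂ)) ^ (-a) := by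
      rw [hIoc, intervalIntegral.integral_of_le zero_le_one]
end

section
/- If Re(c − a − b) > 0 and c is not a nonpositive integer, then the Gauss hypergeometric series at unit argument satisfies ₂F₁(a,b;c|1) = Γ(c)Γ(c−a−b) / (Γ(c−a)Γ(c−b)). -/
open Filter Finset Topology

namespace GaussAux

noncomputable def u (a b c : ℂ) (k : ℕ) : ℂ :=
  pochC a k * pochC b k / (pochC c k * (k.factorial : ℂ))

lemma pochC_zero (p : ℂ) : pochC p 0 = 1 := by simp [pochC]

lemma pochC_succ (p : ℂ) (k : ℕ) : pochC p (k + 1) = pochC p k * (p + k) := by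
  simp [pochC, ascPochhammer_succ_eval]

lemma pochC_eq_prod (p : ℂ) (k : ℕ) : pochC p k = ∏ j ∈ range k, (p + j) := by
  induction k with
  | zero => simp [pochC]
  | succ k ih => rw [pochC_succ, ih, prod_range_succ]

lemma hyp_eq (a b c : ℂ) : hyp2F1 a b c 1 = ∑' k, u a b c k := by
  simp [hyp2F1, u]

lemma u_eq_prod {c : ℂ} (hc : ∀ j : ℕ, c + j ≠ 0) (a b : ℂ) (k : ℕ) :
    u a b c k = ∏ j ∈ range k, ((a + j) * (b + j) / ((c + j) * (j + 1))) := by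
  have hfact : (k.factorial : ℂ) = ∏ j ∈ range k, ((j : ℂ) + 1) := by
    induction k with
    | zero => simp
    | succ k ih => rw [Nat.factorial_succ, prod_range_succ, ← ih]; push_cast; ring
  rw [u, pochC_eq_prod, pochC_eq_prod, pochC_eq_prod, hfact]
  rw [prod_mul_distrib.symm, ← prod_mul_distrib, ← prod_div_distrib]

lemma norm_u {c : ℂ} (hc : ∀ j : ℕ, c + j ≠ 0) (a b : ℂ) (k : ℕ) :
    ‖u a b c k‖ = ∏ j ∈ range k, (‖a + j‖ * ‖b + j‖ / (‖c + j‖ * (j + 1))) := by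
  rw [u_eq_prod hc]
  rw [norm_prod]
  refine Finset.prod_congr rfl fun j _ => ?_
  have h1 : ‖((j:ℂ) + 1)‖ = (j:ℝ) + 1 := by
    rw [show ((j:ℂ)+1) = ((j+1:ℕ):ℂ) by norm_cast, Complex.norm_natCast]; push_cast; ring
  rw [norm_div, norm_mul, norm_mul, h1]


lemma inv_natCast_tendsto : Tendsto (fun k : ℕ => ((k : ℂ))⁻¹) atTop (𝓝 0) := by
  have h := tendsto_inv_atTop_nhds_zero_nat (𝕜 := ℝ)
  have := (Complex.continuous_ofReal.tendsto 0).comp h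
  refine this.congr fun n => ?_
  simp [Function.comp]

lemma norm_div_nat (a : ℂ) : Tendsto (fun k : ℕ => ‖a + k‖ / k) atTop (𝓝 1) := by
  have h0 : Tendsto (fun k : ℕ => a * (k : ℂ)⁻¹ + 1) atTop (𝓝 1) := by
    simpa using ((inv_natCast_tendsto.const_mul a).add tendsto_const_nhds)
  have : Tendsto (fun k : ℕ => ‖a * (k : ℂ)⁻¹ + 1‖) atTop (𝓝 1) := by
    simpa [Function.comp_def] using (continuous_norm.continuousAt.tendsto.comp h0)
  refine this.congr' ?_
  filter_upwards [eventually_gt_atTop 0] with k hk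
  have hk' : ((k : ℂ)) ≠ 0 := Nat.cast_ne_zero.mpr hk.ne'
  rw [show a * (k:ℂ)⁻¹ + 1 = (a + k) / k by field_simp]
  rw [norm_div, Complex.norm_natCast]

lemma tendsto_norm_add_sub (a : ℂ) :
    Tendsto (fun k : ℕ => ‖a + k‖ - k) atTop (𝓝 a.re) := by
  have key : ∀ᶠ k : ℕ in atTop, ‖a + k‖ - k
      = (2 * a.re + ‖a‖ ^ 2 / k) / (‖a + k‖ / k + 1) := by
    filter_upwards [eventually_gt_atTop 0] with k hk
    have hk0 : (0:ℝ) < k := by exact_mod_cast hk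
    have hden : (0:ℝ) < ‖a + k‖ + k := by positivity
    have hsq : ‖a + k‖ ^ 2 = (a.re + k) ^ 2 + a.im ^ 2 := by
      rw [Complex.sq_norm, Complex.normSq_apply]
      simp
      ring
    have hsq' : ‖a‖ ^ 2 = a.re ^ 2 + a.im ^ 2 := by
      rw [Complex.sq_norm, Complex.normSq_apply]
      ring
    have h2 : (‖a + k‖ - k) * (‖a + k‖ + k) = 2 * k * a.re + ‖a‖ ^ 2 := by
      nlinarith [hsq, hsq']
    have hrw : (2 * a.re + ‖a‖ ^ 2 / k) / (‖a + k‖ / k + 1)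
        = (2 * k * a.re + ‖a‖ ^ 2) / (‖a + k‖ + k) := by
      have hd2 : (0:ℝ) < ‖a + k‖ / k + 1 := by positivity
      field_simp
    rw [hrw, eq_div_iff hden.ne']
    exact h2
  have h1 := norm_div_nat a
  have h2 : Tendsto (fun k : ℕ => ‖a‖ ^ 2 / k) atTop (𝓝 0) := by
    have := (tendsto_inv_atTop_nhds_zero_nat (𝕜 := ℝ)).const_mul (‖a‖^2)
    simpa [div_eq_mul_inv] using this
  have hmain : Tendsto (fun k : ℕ => (2 * a.re + ‖a‖ ^ 2 / k) / (‖a + k‖ / k + 1)) atTop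
      (𝓝 ((2 * a.re + 0) / (1 + 1))) :=
    (tendsto_const_nhds.add h2).div (h1.add tendsto_const_nhds) (by norm_num)
  rw [show (2 * a.re + 0) / (1 + 1) = a.re by ring] at hmain
  exact Tendsto.congr' (key.mono fun k h => h.symm) hmain

lemma tendsto_k_one_sub_ratio (a b c : ℂ) :
    Tendsto (fun k : ℕ => (k:ℝ) * (1 - ‖a + k‖ * ‖b + k‖ / (‖c + k‖ * ((k:ℝ) + 1))))
      atTop (𝓝 (1 + (c.re - a.re - b.re))) := by
  set α := fun k : ℕ => ‖a + k‖ - k with hα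
  set β := fun k : ℕ => ‖b + k‖ - k with hβ
  set γ := fun k : ℕ => ‖c + k‖ - k with hγ
  have hαt := tendsto_norm_add_sub a
  have hβt := tendsto_norm_add_sub b
  have hγt := tendsto_norm_add_sub c
  have hinv : Tendsto (fun k : ℕ => 1 / (k:ℝ)) atTop (𝓝 0) := tendsto_one_div_atTop_nhds_zero_nat
  have hnum : Tendsto (fun k : ℕ => (1 + γ k - α k - β k) + (γ k - α k * β k) * (1 / k))
      atTop (𝓝 (1 + (c.re - a.re - b.re))) := by
    have e1 : Tendsto (fun k : ℕ => 1 + γ k - α k - β k) atTop (𝓝 (1 + c.re - a.re - b.re)) :=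
      (((tendsto_const_nhds : Tendsto (fun _ : ℕ => (1:ℝ)) atTop (𝓝 1)).add hγt).sub hαt).sub hβt
    have e2 : Tendsto (fun k : ℕ => (γ k - α k * β k) * (1 / k)) atTop (𝓝 0) := by
      simpa using (hγt.sub (hαt.mul hβt)).mul hinv
    simpa [add_sub_assoc] using e1.add e2
  have hden : Tendsto (fun k : ℕ => (1 + γ k * (1 / k)) * (1 + 1 / k)) atTop (𝓝 1) := by
    have e1 : Tendsto (fun k : ℕ => 1 + γ k * (1 / k)) atTop (𝓝 1) := by
      simpa using ((tendsto_const_nhds : Tendsto (fun _ : ℕ => (1:ℝ)) atTop (𝓝 1)).add (hγt.mul hinv))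
    have e2 : Tendsto (fun k : ℕ => 1 + 1 / (k:ℝ)) atTop (𝓝 1) := by
      simpa using ((tendsto_const_nhds : Tendsto (fun _ : ℕ => (1:ℝ)) atTop (𝓝 1)).add hinv)
    simpa using e1.mul e2
  have hmain := hnum.div hden (by norm_num)
  rw [div_one] at hmain
  refine Tendsto.congr' ?_ hmain
  filter_upwards [eventually_gt_atTop (Nat.ceil ‖c‖ + 1)] with k hk
  have hk1 : (1:ℝ) ≤ (k:ℝ) := by
    have : 1 ≤ k := by omega
    exact_mod_cast this
  have hkpos : (0:ℝ) < k := by linarith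
  have hcpos : (0:ℝ) < ‖c + k‖ := by
    have h1 : ‖c‖ < (k:ℝ) := by
      have h0 : (Nat.ceil ‖c‖ : ℝ) < (k:ℝ) := by exact_mod_cast Nat.lt_of_succ_le hk.le
      exact lt_of_le_of_lt (Nat.le_ceil _) h0
    have h2 : (k:ℝ) ≤ ‖c + k‖ + ‖c‖ := by
      have h3 := norm_add_le (c + (k:ℂ)) (-c)
      simp only [add_neg_cancel_comm, norm_neg] at h3
      simpa [Complex.norm_natCast] using h3
    linarith
  have hA : ‖a + k‖ = (k:ℝ) + α k := by simp [hα]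
  have hB : ‖b + k‖ = (k:ℝ) + β k := by simp [hβ]
  have hC : ‖c + k‖ = (k:ℝ) + γ k := by simp [hγ]
  rw [hA, hB, hC]
  have hden2 : (0:ℝ) < (k:ℝ) + γ k := by rw [← hC]; exact hcpos
  simp only [Pi.div_apply]
  field_simp
  ring

lemma tendsto_k_one_sub_rpow (s : ℝ) :
    Tendsto (fun k : ℕ => (k:ℝ) * (1 - ((k:ℝ) / ((k:ℝ) + 1)) ^ s)) atTop (𝓝 s) := by
  have hderiv : HasDerivAt (fun x : ℝ => (1 + x) ^ (-s)) (-s) 0 := by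
    have h1 : HasDerivAt (fun x : ℝ => 1 + x) 1 0 := (hasDerivAt_id 0).const_add 1
    have h2 : HasDerivAt (fun y : ℝ => y ^ (-s)) (-s * ((1:ℝ) + 0) ^ (-s - 1)) ((1:ℝ) + 0) :=
      Real.hasDerivAt_rpow_const (Or.inl (by norm_num))
    have h3 := HasDerivAt.comp (𝕜 := ℝ) 0 h2 h1
    simpa [Function.comp_def] using h3
  have hslope := hasDerivAt_iff_tendsto_slope.mp hderiv
  have hx : Tendsto (fun k : ℕ => 1 / (k:ℝ)) atTop (𝓝[≠] 0) := by
    refine tendsto_nhdsWithin_of_tendsto_nhds_of_eventually_within _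
      tendsto_one_div_atTop_nhds_zero_nat ?_
    filter_upwards [eventually_gt_atTop 0] with k hk
    have : (0:ℝ) < k := by exact_mod_cast hk
    have : (1:ℝ)/(k:ℝ) ≠ 0 := by positivity
    simpa using this
  have hcomp := hslope.comp hx
  have hneg : Tendsto (fun k : ℕ => -(((1 + 1/(k:ℝ)) ^ (-s) - 1) / (1 / (k:ℝ)))) atTop (𝓝 s) := by
    have := hcomp.neg
    rw [neg_neg] at this
    refine this.congr fun k => ?_
    simp [slope_def_field, Function.comp, Real.one_rpow]
  refine hneg.congr' ?_
  filter_upwards [eventually_gt_atTop 0] with k hk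
  have hkpos : (0:ℝ) < k := by exact_mod_cast hk
  have h1 : ((k:ℝ) / ((k:ℝ) + 1)) ^ s = (1 + 1/(k:ℝ)) ^ (-s) := by
    rw [Real.rpow_neg (by positivity)]
    rw [show (1 + 1/(k:ℝ)) = (((k:ℝ)+1)/(k:ℝ)) by field_simp]
    rw [← Real.inv_rpow (by positivity), inv_div]
  rw [h1]
  field_simp
  ring

lemma norm_u_succ {c : ℂ} (hc : ∀ j : ℕ, c + j ≠ 0) (a b : ℂ) (k : ℕ) :
    ‖u a b c (k+1)‖ = ‖u a b c k‖ * (‖a + k‖ * ‖b + k‖ / (‖c + k‖ * ((k:ℝ) + 1))) := by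
  rw [norm_u hc, norm_u hc, prod_range_succ]

lemma exists_bound {a b c : ℂ} (hε : 0 < (c - a - b).re) (hc : ∀ j : ℕ, c + j ≠ 0) :
    ∃ C : ℝ, 0 ≤ C ∧ ∀ k : ℕ, 1 ≤ k →
      ‖u a b c k‖ ≤ C * (k:ℝ) ^ (-(1 + (c - a - b).re / 2)) := by
  set ε := (c - a - b).re with hεdef
  set s := 1 + ε / 2 with hs
  have hspos : 0 < s := by positivity
  have hεre : ε = c.re - a.re - b.re := by simp [hεdef, Complex.sub_re]
  have hq := tendsto_k_one_sub_rpow s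
  have hr := tendsto_k_one_sub_ratio a b c
  rw [← hεre] at hr
  have hlt : s < 1 + ε := by rw [hs]; linarith
  have hev : ∀ᶠ k : ℕ in atTop,
      (k:ℝ) * (1 - ((k:ℝ) / ((k:ℝ) + 1)) ^ s)
        < (k:ℝ) * (1 - ‖a + k‖ * ‖b + k‖ / (‖c + k‖ * ((k:ℝ) + 1))) :=
    hq.eventually_lt hr hlt
  obtain ⟨K, hK⟩ := (hev.and (eventually_ge_atTop 1)).exists_forall_of_atTop
  have hKpos : ∀ k : ℕ, K ≤ k → 1 ≤ k := fun k hk => (hK k hk).2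
  have hK1 : 1 ≤ K := (hK K le_rfl).2
  -- ratio bound
  have hratio : ∀ k : ℕ, K ≤ k →
      ‖a + k‖ * ‖b + k‖ / (‖c + k‖ * ((k:ℝ) + 1)) ≤ ((k:ℝ) / ((k:ℝ) + 1)) ^ s := by
    intro k hk
    have h1 := (hK k hk).1
    have hkp : (0:ℝ) < k := by exact_mod_cast Nat.lt_of_lt_of_le Nat.zero_lt_one (hK k hk).2
    have := (mul_lt_mul_iff_right₀ hkp).mp h1
    linarith
  -- v monotone
  set v := fun k : ℕ => ‖u a b c k‖ * (k:ℝ) ^ s with hv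
  have hstep : ∀ k : ℕ, K ≤ k → v (k+1) ≤ v k := by
    intro k hk
    have hkp : (0:ℝ) < k := by
      exact_mod_cast Nat.lt_of_lt_of_le Nat.zero_lt_one (hKpos k hk)
    have hq1 : ((k:ℝ) / ((k:ℝ) + 1)) ^ s * ((k:ℝ) + 1) ^ s = (k:ℝ) ^ s := by
      rw [← Real.mul_rpow (by positivity) (by positivity)]
      congr 1
      field_simp
    have hcast : ((k+1 : ℕ):ℝ) = (k:ℝ) + 1 := by push_cast; ring
    calc v (k+1) = ‖u a b c k‖ * ((‖a + k‖ * ‖b + k‖ / (‖c + k‖ * ((k:ℝ) + 1)))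
            * ((k:ℝ) + 1) ^ s) := by
          rw [hv]; simp only []; rw [norm_u_succ hc, hcast]; ring
      _ ≤ ‖u a b c k‖ * (((k:ℝ) / ((k:ℝ) + 1)) ^ s * ((k:ℝ) + 1) ^ s) := by
          refine mul_le_mul_of_nonneg_left ?_ (norm_nonneg _)
          exact mul_le_mul_of_nonneg_right (hratio k hk) (Real.rpow_nonneg (by positivity) _)
      _ = v k := by rw [hq1]
  have hvmono : ∀ k : ℕ, K ≤ k → v k ≤ v K := by
    intro k hk
    induction k, hk using Nat.le_induction with
    | base => exact le_rfl
    | succ k hk ih => exact le_trans (hstep k hk) ih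
  set C := ∑ j ∈ Finset.Icc 1 K, v j with hC
  have hvnonneg : ∀ j : ℕ, 0 ≤ v j := fun j =>
    mul_nonneg (norm_nonneg _) (Real.rpow_nonneg (Nat.cast_nonneg _) _)
  have hCv : ∀ k : ℕ, 1 ≤ k → v k ≤ C := by
    intro k hk1
    rcases le_or_gt k K with h | h
    · exact Finset.single_le_sum (fun j _ => hvnonneg j) (Finset.mem_Icc.mpr ⟨hk1, h⟩)
    · exact le_trans (hvmono k h.le)
        (Finset.single_le_sum (fun j _ => hvnonneg j) (Finset.mem_Icc.mpr ⟨hK1, le_rfl⟩))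
  refine ⟨C, le_trans (hvnonneg K) (hCv K hK1), fun k hk1 => ?_⟩
  have hkp : (0:ℝ) < k := by exact_mod_cast Nat.lt_of_lt_of_le Nat.zero_lt_one hk1
  have hks : (0:ℝ) < (k:ℝ) ^ s := Real.rpow_pos_of_pos hkp _
  have := hCv k hk1
  rw [hv] at this
  simp only [] at this
  rw [Real.rpow_neg hkp.le]
  calc ‖u a b c k‖ = (‖u a b c k‖ * (k:ℝ) ^ s) * ((k:ℝ) ^ s)⁻¹ := by
        field_simp
    _ ≤ C * ((k:ℝ) ^ s)⁻¹ := by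
        exact mul_le_mul_of_nonneg_right this (by positivity)

lemma summable_norm_u {a b c : ℂ} (hε : 0 < (c - a - b).re) (hc : ∀ j : ℕ, c + j ≠ 0) :
    Summable (fun k : ℕ => ‖u a b c k‖) := by
  obtain ⟨C, hC0, hC⟩ := exists_bound hε hc
  set s := 1 + (c - a - b).re / 2 with hs
  have hs1 : (1:ℝ) < s := by rw [hs]; linarith
  have h1 : Summable (fun k : ℕ => C * ((k:ℝ) ^ (-s))) :=
    (Real.summable_nat_rpow.mpr (by linarith)).mul_left C
  have h2 : Summable (fun k : ℕ => C * (((k+1:ℕ)):ℝ) ^ (-s)) :=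
    h1.comp_injective (add_left_injective 1) |>.congr (fun k => rfl)
  have h3 : Summable (fun k : ℕ => ‖u a b c (k+1)‖) := by
    refine h2.of_nonneg_of_le (fun k => norm_nonneg _) (fun k => ?_)
    exact hC (k+1) (Nat.succ_le_succ (Nat.zero_le k))
  exact (summable_nat_add_iff 1).mp h3

lemma summable_u {a b c : ℂ} (hε : 0 < (c - a - b).re) (hc : ∀ j : ℕ, c + j ≠ 0) :
    Summable (fun k : ℕ => u a b c k) :=
  (summable_norm_u hε hc).of_norm

lemma tendsto_k_mul_u {a b c : ℂ} (hε : 0 < (c - a - b).re) (hc : ∀ j : ℕ, c + j ≠ 0) :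
    Tendsto (fun k : ℕ => (k:ℂ) * u a b c k) atTop (𝓝 0) := by
  obtain ⟨C, hC0, hC⟩ := exists_bound hε hc
  set δ := (c - a - b).re / 2 with hδ
  have hδ0 : 0 < δ := by positivity
  have hg : Tendsto (fun k : ℕ => C * (k:ℝ) ^ (-δ)) atTop (𝓝 0) := by
    have h1 : Tendsto (fun x : ℝ => x ^ (-δ)) atTop (𝓝 0) := tendsto_rpow_neg_atTop hδ0
    have h2 := h1.comp tendsto_natCast_atTop_atTop (α := ℕ)
    simpa using (h2.const_mul C)
  refine squeeze_zero_norm' ?_ hg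
  filter_upwards [eventually_ge_atTop 1] with k hk
  have hkp : (0:ℝ) < k := by exact_mod_cast Nat.lt_of_lt_of_le Nat.zero_lt_one hk
  have h1 := hC k hk
  have h2 : ‖(k:ℂ) * u a b c k‖ = (k:ℝ) * ‖u a b c k‖ := by
    rw [norm_mul, Complex.norm_natCast]
  rw [h2]
  calc (k:ℝ) * ‖u a b c k‖ ≤ (k:ℝ) * (C * (k:ℝ) ^ (-(1 + (c - a - b).re / 2))) :=
        mul_le_mul_of_nonneg_left h1 hkp.le
    _ = C * (k:ℝ) ^ (-δ) := by
        rw [show -(1 + (c - a - b).re / 2) = -1 + -δ by rw [hδ]; ring,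
          Real.rpow_add hkp, Real.rpow_neg_one]
        field_simp

lemma pochC_succ_left (p : ℂ) (k : ℕ) : pochC p (k+1) = p * pochC (p+1) k := by
  simp [pochC, ascPochhammer_succ_left, Polynomial.eval_comp]

lemma pochC_ne_zero {c : ℂ} (hc : ∀ j : ℕ, c + j ≠ 0) (k : ℕ) : pochC c k ≠ 0 := by
  induction k with
  | zero => simp [pochC_zero]
  | succ k ih => rw [pochC_succ]; exact mul_ne_zero ih (hc k)

lemma key_identity {a b c : ℂ} (hc : ∀ j : ℕ, c + j ≠ 0) (k : ℕ) :
    c * (c - a - b) * u a b c k - (c - a) * (c - b) * u a b (c+1) k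
      = c * ((k:ℂ) * u a b c k - ((k:ℂ) + 1) * u a b c (k+1)) := by
  have hc0 : c ≠ 0 := by have := hc 0; simpa using this
  have hck : c + k ≠ 0 := hc k
  have hc1 : ∀ j : ℕ, (c + 1) + j ≠ 0 := by
    intro j
    have h : (c + 1) + j = c + ((j+1 : ℕ):ℂ) := by push_cast; ring
    rw [h]; exact hc (j+1)
  have hPc : pochC c k ≠ 0 := pochC_ne_zero hc k
  have hQc : pochC (c+1) k ≠ 0 := pochC_ne_zero hc1 k
  have hF : ((k.factorial : ℂ)) ≠ 0 := Nat.cast_ne_zero.mpr (Nat.factorial_ne_zero k)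
  have hrel : c * pochC (c+1) k = pochC c k * (c + k) := by
    rw [← pochC_succ_left, pochC_succ]
  have e1 : (c + k) * u a b (c+1) k = c * u a b c k := by
    rw [u, u]
    field_simp
    linear_combination (-(pochC a k * pochC b k)) * hrel
  have e2 : (c + k) * ((k:ℂ) + 1) * u a b c (k+1) = (a + k) * (b + k) * u a b c k := by
    rw [u, u, pochC_succ, pochC_succ, pochC_succ,
      show ((k+1).factorial : ℂ) = ((k:ℂ) + 1) * (k.factorial : ℂ) by
        rw [Nat.factorial_succ]; push_cast; ring]
    have hk1 : ((k:ℂ) + 1) ≠ 0 := by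
      have : ((k+1 : ℕ):ℂ) ≠ 0 := Nat.cast_ne_zero.mpr (Nat.succ_ne_zero k)
      push_cast at this; exact this
    field_simp
  apply mul_left_cancel₀ hck
  linear_combination (-((c - a) * (c - b))) * e1 + c * e2

lemma contig {a b c : ℂ} (hε : 0 < (c - a - b).re) (hc : ∀ n : ℕ, c + n ≠ 0) :
    c * (c - a - b) * (∑' k, u a b c k)
      = (c - a) * (c - b) * (∑' k, u a b (c+1) k) := by
  have hc1 : ∀ n : ℕ, (c + 1) + n ≠ 0 := by
    intro j
    have h : (c + 1) + j = c + ((j+1 : ℕ):ℂ) := by push_cast; ring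
    rw [h]; exact hc (j+1)
  have hε1 : 0 < ((c + 1) - a - b).re := by
    have h : ((c + 1) - a - b).re = (c - a - b).re + 1 := by
      simp [Complex.add_re, Complex.sub_re]; ring
    rw [h]; linarith
  have hsum1 := summable_u hε hc
  have hsum2 := summable_u hε1 hc1
  set t := fun k : ℕ => (k:ℂ) * u a b c k with ht
  have hdiff : ∀ k : ℕ, c * (c - a - b) * u a b c k - (c - a) * (c - b) * u a b (c+1) k
      = c * (t k - t (k+1)) := by
    intro k
    rw [key_identity hc k, ht]
    push_cast
    ring
  have hsummable : Summable (fun k : ℕ =>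
      c * (c - a - b) * u a b c k - (c - a) * (c - b) * u a b (c+1) k) :=
    (hsum1.mul_left _).sub (hsum2.mul_left _)
  have hlim : Tendsto (fun n : ℕ => ∑ k ∈ range n,
      (c * (c - a - b) * u a b c k - (c - a) * (c - b) * u a b (c+1) k)) atTop (𝓝 0) := by
    have heq : (fun n : ℕ => ∑ k ∈ range n,
        (c * (c - a - b) * u a b c k - (c - a) * (c - b) * u a b (c+1) k))
        = fun n : ℕ => c * (t 0 - t n) := by
      funext n
      rw [Finset.sum_congr rfl (fun k _ => hdiff k), ← Finset.mul_sum, Finset.sum_range_sub']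
    rw [heq]
    have ht0 : t 0 = 0 := by simp [ht]
    rw [ht0]
    have := (tendsto_k_mul_u hε hc).const_mul c
    simpa [ht] using this.neg.congr (fun n => by ring)
  have hts := hsummable.hasSum.tendsto_sum_nat
  have hzero : (∑' k : ℕ, (c * (c - a - b) * u a b c k - (c - a) * (c - b) * u a b (c+1) k)) = 0 :=
    tendsto_nhds_unique hts hlim
  rw [Summable.tsum_sub (hsum1.mul_left _) (hsum2.mul_left _), tsum_mul_left, tsum_mul_left] at hzero
  linear_combination hzero

lemma norm_cast_add_nat (x : ℝ) (hx : 0 ≤ x) (j : ℕ) : ‖((x:ℂ) + j)‖ = x + j := by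
  rw [show ((x:ℂ) + j) = (((x + j : ℝ)):ℂ) by push_cast; ring, Complex.norm_real]
  exact abs_of_nonneg (by positivity)

lemma tendsto_shifted (a b c : ℂ) :
    Tendsto (fun n : ℕ => ∑' k, u a b (c + n) k) atTop (𝓝 1) := by
  set d : ℝ := ‖a‖ + ‖b‖ + 1 with hd
  have hd1 : (1:ℝ) ≤ d := by rw [hd]; have := norm_nonneg a; have := norm_nonneg b; linarith
  have hdpole : ∀ j : ℕ, (d:ℂ) + j ≠ 0 := by
    intro j h
    have := congrArg Complex.re h
    simp [Complex.add_re] at this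
    have hj : (0:ℝ) ≤ j := Nat.cast_nonneg j
    nlinarith [this]
  have hdε : 0 < ((d:ℂ) - (‖a‖:ℝ) - (‖b‖:ℝ)).re := by
    have h : ((d:ℂ) - (‖a‖:ℝ) - (‖b‖:ℝ)).re = d - ‖a‖ - ‖b‖ := by simp [Complex.sub_re]
    rw [h, hd]; linarith
  have hbound_sum : Summable (fun k : ℕ => ‖u (‖a‖:ℝ) (‖b‖:ℝ) (d:ℝ) k‖) := by
    exact_mod_cast summable_norm_u hdε hdpole
  set g : ℕ → ℂ := fun k => if k = 0 then 1 else 0 with hg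
  have hfac : ∀ j : ℕ, Tendsto (fun n : ℕ => ‖c + n + j‖) atTop atTop := by
    intro j
    refine tendsto_atTop_mono' atTop ?_ (tendsto_atTop_add_const_right atTop (-‖c + (j:ℂ)‖)
      tendsto_natCast_atTop_atTop)
    filter_upwards with n
    have h1 : ‖(n:ℂ)‖ - ‖c + (j:ℂ)‖ ≤ ‖c + n + j‖ := by
      have h2 := norm_add_le (c + (n:ℂ) + (j:ℂ)) (-(c + (j:ℂ)))
      have h3 : c + (n:ℂ) + (j:ℂ) + -(c + (j:ℂ)) = (n:ℂ) := by ring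
      rw [h3] at h2
      simp only [norm_neg] at h2
      linarith
    simpa [Complex.norm_natCast] using h1
  have hpoch : ∀ m : ℕ, Tendsto (fun n : ℕ => ‖pochC (c + n) (m+1)‖) atTop atTop := by
    intro m
    induction m with
    | zero =>
      refine (hfac 0).congr fun n => ?_
      simp [pochC_succ, pochC_zero]
    | succ m ih =>
      have := ih.atTop_mul_atTop₀ (hfac (m+1))
      refine this.congr fun n => ?_
      conv_rhs => rw [pochC_succ]
      rw [norm_mul]
  have hab : ∀ k : ℕ, Tendsto (fun n : ℕ => u a b (c + n) k) atTop (𝓝 (g k)) := by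
    intro k
    match k with
    | 0 => simp [u, pochC_zero, hg]
    | (m+1) =>
      have hgz : g (m+1) = 0 := by simp [hg]
      rw [hgz, tendsto_zero_iff_norm_tendsto_zero]
      have hnum : ∀ n : ℕ, ‖u a b (c + n) (m+1)‖
          = ‖pochC a (m+1) * pochC b (m+1) / ((m+1).factorial : ℂ)‖ * ‖pochC (c + n) (m+1)‖⁻¹ := by
        intro n
        rw [u]
        simp only [norm_div, norm_mul]
        ring
      have h0 := (hpoch m).inv_tendsto_atTop.const_mul
        (‖pochC a (m+1) * pochC b (m+1) / ((m+1).factorial : ℂ)‖)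
      simp only [mul_zero] at h0
      exact h0.congr fun n => (hnum n).symm
  have h_bound : ∀ᶠ n : ℕ in atTop, ∀ k : ℕ,
      ‖u a b (c + n) k‖ ≤ ‖u (‖a‖:ℝ) (‖b‖:ℝ) (d:ℝ) k‖ := by
    filter_upwards [eventually_ge_atTop (Nat.ceil (‖c‖ + d))] with n hn k
    have hnr : ‖c‖ + d ≤ (n:ℝ) := le_trans (Nat.le_ceil _) (by exact_mod_cast hn)
    have hlow : ∀ j : ℕ, d + j ≤ ‖c + n + j‖ := by
      intro j
      have h2 := norm_add_le (c + (n:ℂ) + (j:ℂ)) (-c)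
      have h3 : c + (n:ℂ) + (j:ℂ) + -c = ((n:ℂ) + (j:ℂ)) := by ring
      rw [h3] at h2
      simp only [norm_neg] at h2
      have h4 : ‖(n:ℂ) + (j:ℂ)‖ = (n:ℝ) + j := by
        rw [show ((n:ℂ) + (j:ℂ)) = (((n + j : ℕ)):ℂ) by push_cast; ring, Complex.norm_natCast]
        push_cast; ring
      rw [h4] at h2
      have : (0:ℝ) ≤ j := Nat.cast_nonneg j
      linarith
    have hcn : ∀ j : ℕ, (c + n) + j ≠ 0 := by
      intro j h
      have := hlow j
      rw [show c + (n:ℂ) + (j:ℂ) = (c + n) + j by ring, h] at this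
      simp at this
      have : (0:ℝ) ≤ j := Nat.cast_nonneg j
      nlinarith [hlow j, hd1]
    rw [norm_u hcn, norm_u hdpole]
    refine Finset.prod_le_prod (fun j _ => by positivity) (fun j _ => ?_)
    have hnorm_a : ‖(((‖a‖:ℝ)):ℂ) + j‖ = ‖a‖ + j := norm_cast_add_nat _ (norm_nonneg a) j
    have hnorm_b : ‖(((‖b‖:ℝ)):ℂ) + j‖ = ‖b‖ + j := norm_cast_add_nat _ (norm_nonneg b) j
    have hnorm_d : ‖((d:ℝ):ℂ) + j‖ = d + j := norm_cast_add_nat _ (by positivity) j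
    rw [hnorm_a, hnorm_b, hnorm_d]
    have hja : ‖a + j‖ ≤ ‖a‖ + j := by
      have := norm_add_le a (j:ℂ)
      simpa [Complex.norm_natCast] using this
    have hjb : ‖b + j‖ ≤ ‖b‖ + j := by
      have := norm_add_le b (j:ℂ)
      simpa [Complex.norm_natCast] using this
    have hlj : d + j ≤ ‖(c + n) + j‖ := by
      have := hlow j
      rw [show c + (n:ℂ) + (j:ℂ) = (c + n) + j by ring] at this
      exact this
    have hdjpos : (0:ℝ) < d + j := by positivity
    refine div_le_div₀ (by positivity) ?_ (by positivity) ?_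
    · exact mul_le_mul hja hjb (norm_nonneg _) (by positivity)
    · exact mul_le_mul_of_nonneg_right hlj (by positivity)
  have hfinal := tendsto_tsum_of_dominated_convergence hbound_sum hab h_bound
  have hgsum : (∑' k, g k) = 1 := by
    rw [hg]
    exact tsum_ite_eq 0 1
  rw [hgsum] at hfinal
  exact hfinal

lemma prodP_tendsto {a b c : ℂ} (hconv : 0 < (c - a - b).re)
    (hc : ∀ n : ℕ, c ≠ -(n : ℂ)) (hca : ∀ n : ℕ, c - a ≠ -(n : ℂ))
    (hcb : ∀ n : ℕ, c - b ≠ -(n : ℂ)) :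
    Tendsto (fun n : ℕ => ∏ j ∈ range n,
        ((c - a + j) * (c - b + j) / ((c + j) * (c - a - b + j)))) atTop
      (𝓝 (Complex.Gamma c * Complex.Gamma (c - a - b) /
        (Complex.Gamma (c - a) * Complex.Gamma (c - b)))) := by
  have hcab : ∀ n : ℕ, c - a - b ≠ -(n : ℂ) := by
    intro n h
    have := congrArg Complex.re h
    have h3 : (c - a - b).re = -(n:ℝ) := by rw [h]; simp
    have h2 : (0:ℝ) ≤ (n:ℝ) := Nat.cast_nonneg n
    rw [h3] at hconv
    linarith
  have hne : ∀ (s : ℂ), (∀ n : ℕ, s ≠ -(n : ℂ)) → ∀ j : ℕ, s + j ≠ 0 := by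
    intro s hs j h
    exact hs j (by linear_combination h)
  have hGr : Tendsto (fun n : ℕ => Complex.GammaSeq c n * Complex.GammaSeq (c - a - b) n /
      (Complex.GammaSeq (c - a) n * Complex.GammaSeq (c - b) n)) atTop
      (𝓝 (Complex.Gamma c * Complex.Gamma (c - a - b) /
        (Complex.Gamma (c - a) * Complex.Gamma (c - b)))) := by
    refine Tendsto.div
      ((Complex.GammaSeq_tendsto_Gamma c).mul (Complex.GammaSeq_tendsto_Gamma (c - a - b)))
      ((Complex.GammaSeq_tendsto_Gamma (c - a)).mul (Complex.GammaSeq_tendsto_Gamma (c - b))) ?_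
    exact mul_ne_zero (Complex.Gamma_ne_zero hca) (Complex.Gamma_ne_zero hcb)
  have heq : ∀ᶠ n : ℕ in atTop,
      Complex.GammaSeq c n * Complex.GammaSeq (c - a - b) n /
        (Complex.GammaSeq (c - a) n * Complex.GammaSeq (c - b) n)
      = ∏ j ∈ range (n + 1),
          ((c - a + j) * (c - b + j) / ((c + j) * (c - a - b + j))) := by
    filter_upwards [eventually_ge_atTop 1] with n hn
    have hn0 : ((n:ℂ)) ≠ 0 := Nat.cast_ne_zero.mpr (by omega)
    have hPc : (∏ j ∈ range (n+1), (c + j)) ≠ 0 :=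
      Finset.prod_ne_zero_iff.mpr fun j _ => hne c hc j
    have hPca : (∏ j ∈ range (n+1), (c - a + j)) ≠ 0 :=
      Finset.prod_ne_zero_iff.mpr fun j _ => hne _ hca j
    have hPcb : (∏ j ∈ range (n+1), (c - b + j)) ≠ 0 :=
      Finset.prod_ne_zero_iff.mpr fun j _ => hne _ hcb j
    have hPcab : (∏ j ∈ range (n+1), (c - a - b + j)) ≠ 0 :=
      Finset.prod_ne_zero_iff.mpr fun j _ => hne _ hcab j
    have hF : ((n.factorial : ℂ)) ≠ 0 := Nat.cast_ne_zero.mpr (Nat.factorial_ne_zero n)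
    have hW : (n:ℂ) ^ c * (n:ℂ) ^ (c - a - b) = (n:ℂ) ^ (c - a) * (n:ℂ) ^ (c - b) := by
      rw [← Complex.cpow_add _ _ hn0, ← Complex.cpow_add _ _ hn0]
      congr 1
      ring
    have hWne : ∀ s : ℂ, ((n:ℂ)) ^ s ≠ 0 := fun s h =>
      hn0 ((Complex.cpow_eq_zero_iff _ _).mp h).1
    have hP : (∏ j ∈ range (n + 1), ((c - a + j) * (c - b + j) / ((c + j) * (c - a - b + j))))
        = (∏ j ∈ range (n+1), (c - a + j)) * (∏ j ∈ range (n+1), (c - b + j))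
          / ((∏ j ∈ range (n+1), (c + j)) * (∏ j ∈ range (n+1), (c - a - b + j))) := by
      rw [prod_div_distrib, prod_mul_distrib, prod_mul_distrib]
    rw [hP, Complex.GammaSeq, Complex.GammaSeq, Complex.GammaSeq, Complex.GammaSeq]
    rw [div_mul_div_comm, div_mul_div_comm, div_div_div_comm,
      show (↑n:ℂ) ^ c * (↑n.factorial:ℂ) * ((↑n:ℂ) ^ (c - a - b) * (↑n.factorial:ℂ))
        = (↑n:ℂ) ^ (c - a) * (↑n.factorial:ℂ) * ((↑n:ℂ) ^ (c - b) * (↑n.factorial:ℂ)) from by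
          linear_combination ((↑n.factorial:ℂ) * (↑n.factorial:ℂ)) * hW,
      div_self (mul_ne_zero (mul_ne_zero (hWne _) hF) (mul_ne_zero (hWne _) hF)), one_div_div]
  have h1 : Tendsto (fun n : ℕ => ∏ j ∈ range (n + 1),
      ((c - a + j) * (c - b + j) / ((c + j) * (c - a - b + j)))) atTop
      (𝓝 (Complex.Gamma c * Complex.Gamma (c - a - b) /
        (Complex.Gamma (c - a) * Complex.Gamma (c - b)))) :=
    hGr.congr' heq
  exact (tendsto_add_atTop_iff_nat 1).mp h1

end GaussAux

open GaussAux in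
/-- Gauss's theorem: the hypergeometric series at unit argument. -/
theorem gauss_at_one (a b c : ℂ)
    (hconv : 0 < (c - a - b).re)
    (hc : ∀ n : ℕ, c ≠ -(n : ℂ))
    (hca : ∀ n : ℕ, c - a ≠ -(n : ℂ))
    (hcb : ∀ n : ℕ, c - b ≠ -(n : ℂ)) :
    hyp2F1 a b c 1 =
      Complex.Gamma c * Complex.Gamma (c - a - b) /
        (Complex.Gamma (c - a) * Complex.Gamma (c - b)) := by
  have hc' : ∀ n : ℕ, c + n ≠ 0 := fun n h => hc n (by linear_combination h)
  set f : ℕ → ℂ := fun n => ∑' k, u a b (c + n) k with hf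
  set P : ℕ → ℂ := fun n => ∏ j ∈ Finset.range n,
    ((c - a + j) * (c - b + j) / ((c + j) * (c - a - b + j))) with hPdef
  have hrec : ∀ n : ℕ, (∑' k, u a b c k) = P n * f n := by
    intro n
    induction n with
    | zero =>
      have h0 : f 0 = ∑' k, u a b c k := by rw [hf]; norm_num
      rw [hPdef]
      simp only [Finset.range_zero, Finset.prod_empty, one_mul]
      rw [h0]
    | succ n ih =>
      rw [ih, hPdef]
      simp only []
      rw [Finset.prod_range_succ]
      have hcn : ∀ j : ℕ, (c + n) + j ≠ 0 := fun j => by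
        have h : (c + (n:ℂ)) + (j:ℂ) = c + ((n + j : ℕ) : ℂ) := by push_cast; ring
        rw [h]; exact hc' (n + j)
      have hεn : 0 < ((c + n) - a - b).re := by
        have h : ((c + (n:ℂ)) - a - b).re = (c - a - b).re + n := by
          simp [Complex.add_re, Complex.sub_re, Complex.natCast_re]
          ring
        rw [h]
        have h2 : (0:ℝ) ≤ n := Nat.cast_nonneg n
        linarith
      have hcontig := contig hεn hcn
      have hshift : (∑' k, u a b ((c + n) + 1) k) = f (n+1) := by
        rw [hf]
        have h : (c + (n:ℂ)) + 1 = c + ((n+1 : ℕ):ℂ) := by push_cast; ring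
        rw [h]
      rw [hshift] at hcontig
      have hne1 : (c + (n:ℂ)) ≠ 0 := hc' n
      have hne2 : ((c + (n:ℂ)) - a - b) ≠ 0 := fun h => by
        rw [h] at hεn; simp at hεn
      have hkey : f n = ((c - a + n) * (c - b + n) / ((c + n) * (c - a - b + n))) * f (n+1) := by
      -- from hcontig
        have hrw : f n = ∑' k, u a b (c + n) k := rfl
        rw [hrw]
        rw [eq_comm, div_mul_eq_mul_div, div_eq_iff (by
          intro h
          rcases mul_eq_zero.mp h with h1 | h1
          · exact hne1 h1
          · exact hne2 (by linear_combination h1))]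
        linear_combination -hcontig
      rw [hkey]
      ring
  have hPlim := prodP_tendsto hconv hc hca hcb
  have hfone : Tendsto f atTop (𝓝 1) := tendsto_shifted a b c
  have hmul := hPlim.mul hfone
  have hconst : (fun n : ℕ => P n * f n) = fun _ : ℕ => ∑' k, u a b c k :=
    funext fun n => (hrec n).symm
  rw [hconst] at hmul
  have hfinal := tendsto_nhds_unique tendsto_const_nhds hmul
  rw [hyp_eq, hfinal, mul_one]
end

section
/- For every nonnegative integer k and complex parameters a, b for which all gamma functions below are defined, the finite sum identity holds: Σ_{n=0}^{k} (−1)^n Γ(a+n−1/2) / (n! (k−n)! Γ(a+n+k+1/2)) · (a+2n−1/2) / (b(b−1) − (a+2n)(a+2n−1)) = −(1/4) Γ((a−b)/2) Γ((a+b−1)/2) / (Γ((a−b)/2 + k + 1) Γ((a+b+1)/2 + k)). -/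
set_option maxHeartbeats 1000000

noncomputable def tt (a b : ℂ) (k n : ℕ) : ℂ :=
  (-1 : ℂ) ^ n * Complex.Gamma (a + n - 1/2) /
      ((n.factorial : ℂ) * ((k - n).factorial : ℂ) * Complex.Gamma (a + n + k + 1/2)) *
      ((a + 2 * n - 1/2) / (b * (b - 1) - (a + 2 * n) * (a + 2 * n - 1)))

noncomputable def gg (a : ℂ) (k n : ℕ) : ℂ :=
  (-1 : ℂ) ^ n * n * Complex.Gamma (a + n - 1/2) /
      (4 * ((k : ℂ) + 1) * (n.factorial : ℂ) * ((k + 1 - n).factorial : ℂ) *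
        Complex.Gamma (a + n + k + 1/2))

lemma shift_ne (z : ℂ) (hz : ∀ m : ℕ, z ≠ -(m : ℂ)) (j : ℕ) :
    ∀ m : ℕ, z + j ≠ -(m : ℂ) := by
  intro m h
  apply hz (m + j)
  push_cast
  linear_combination h

lemma shift_ne0 (z : ℂ) (hz : ∀ m : ℕ, z ≠ -(m : ℂ)) (j : ℕ) : z + j ≠ 0 := by
  have := shift_ne z hz j 0
  simpa using this

lemma step_eq (a b : ℂ)
    (ha : ∀ m : ℕ, a - 1/2 ≠ -(m : ℂ)) (k n : ℕ) (hn : n ≤ k)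
    (hd : b * (b - 1) - (a + 2 * n) * (a + 2 * n - 1) ≠ 0) :
    ((a - b)/2 + k + 1) * ((a + b + 1)/2 + k) * tt a b (k+1) n
      = tt a b k n + (gg a k (n+1) - gg a k n) := by
  have hg : Complex.Gamma (a + n - 1/2) ≠ 0 := by
    have e : a + (n : ℂ) - 1/2 = a - 1/2 + n := by ring
    rw [e]; exact Complex.Gamma_ne_zero (shift_ne _ ha n)
  have hzh : a + (n : ℂ) + k + 1/2 ≠ 0 := by
    have e : a + (n : ℂ) + k + 1/2 = a - 1/2 + (n + k + 1 : ℕ) := by push_cast; ring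
    rw [e]; exact shift_ne0 _ ha _
  have hh : Complex.Gamma (a + n + k + 1/2) ≠ 0 := by
    have e : a + (n : ℂ) + k + 1/2 = a - 1/2 + (n + k + 1 : ℕ) := by push_cast; ring
    rw [e]; exact Complex.Gamma_ne_zero (shift_ne _ ha _)
  have hzg : a + (n : ℂ) - 1/2 ≠ 0 := by
    have e : a + (n : ℂ) - 1/2 = a - 1/2 + n := by ring
    rw [e]; exact shift_ne0 _ ha n
  unfold tt gg
  have h1 : a + (n : ℂ) + ((k+1 : ℕ) : ℂ) + 1/2 = (a + n + k + 1/2) + 1 := by push_cast; ring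
  have h2 : a + (((n+1 : ℕ)) : ℂ) - 1/2 = (a + n - 1/2) + 1 := by push_cast; ring
  have h3 : a + (((n+1 : ℕ)) : ℂ) + k + 1/2 = (a + n + k + 1/2) + 1 := by push_cast; ring
  rw [h1, h2, h3, Complex.Gamma_add_one _ hzh, Complex.Gamma_add_one _ hzg]
  have hf1 : k + 1 - n = (k - n) + 1 := by omega
  have hf2 : k + 1 - (n + 1) = k - n := by omega
  rw [hf1, hf2, Nat.factorial_succ (k - n), Nat.factorial_succ n]
  have hcast : ((k - n : ℕ) : ℂ) = (k : ℂ) - n := Nat.cast_sub hn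
  have hfn : ((n.factorial : ℂ)) ≠ 0 := Nat.cast_ne_zero.mpr n.factorial_ne_zero
  have hfk : (((k - n).factorial : ℂ)) ≠ 0 := Nat.cast_ne_zero.mpr (k - n).factorial_ne_zero
  have hk1 : ((k : ℂ) - n + 1) ≠ 0 := by
    rw [← hcast]
    exact_mod_cast Nat.succ_ne_zero (k - n)
  have hn1 : ((n : ℂ) + 1) ≠ 0 := by exact_mod_cast Nat.succ_ne_zero n
  have hkk : ((k : ℂ) + 1) ≠ 0 := by exact_mod_cast Nat.succ_ne_zero k
  rw [pow_succ]
  push_cast [hcast]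
  set g := Complex.Gamma (a + (n:ℂ) - 1/2) with hgdef
  set h := Complex.Gamma (a + (n:ℂ) + (k:ℂ) + 1/2) with hhdef
  set d := b * (b - 1) - (a + 2 * (n:ℂ)) * (a + 2 * (n:ℂ) - 1) with hddef
  have h4 : (4 : ℂ) ≠ 0 := by norm_num
  rw [div_mul_div_comm, div_mul_div_comm, mul_div_assoc']
  rw [div_sub_div _ _ (by apply_rules [mul_ne_zero, one_ne_zero, le_refl]) (by apply_rules [mul_ne_zero, one_ne_zero, le_refl])]
  rw [div_add_div _ _ (by apply_rules [mul_ne_zero, one_ne_zero, le_refl]) (by apply_rules [mul_ne_zero, one_ne_zero, le_refl])]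
  rw [div_eq_div_iff (by apply_rules [mul_ne_zero, one_ne_zero, le_refl]) (by apply_rules [mul_ne_zero, one_ne_zero, le_refl])]
  ring

lemma bdry_eq (a b : ℂ)
    (ha : ∀ m : ℕ, a - 1/2 ≠ -(m : ℂ)) (k : ℕ)
    (hd : b * (b - 1) - (a + 2 * ((k+1 : ℕ) : ℂ)) * (a + 2 * ((k+1 : ℕ) : ℂ) - 1) ≠ 0) :
    ((a - b)/2 + k + 1) * ((a + b + 1)/2 + k) * tt a b (k+1) (k+1)
      = - gg a k (k+1) := by
  have hzh : a + ((k+1 : ℕ) : ℂ) + k + 1/2 ≠ 0 := by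
    have e : a + ((k+1 : ℕ) : ℂ) + k + 1/2 = a - 1/2 + (2*k + 2 : ℕ) := by push_cast; ring
    rw [e]; exact shift_ne0 _ ha _
  have hh : Complex.Gamma (a + ((k+1 : ℕ) : ℂ) + k + 1/2) ≠ 0 := by
    have e : a + ((k+1 : ℕ) : ℂ) + k + 1/2 = a - 1/2 + (2*k + 2 : ℕ) := by push_cast; ring
    rw [e]; exact Complex.Gamma_ne_zero (shift_ne _ ha _)
  unfold tt gg
  have h1 : a + ((k+1 : ℕ) : ℂ) + ((k+1 : ℕ) : ℂ) + 1/2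
      = (a + ((k+1 : ℕ) : ℂ) + k + 1/2) + 1 := by push_cast; ring
  rw [h1, Complex.Gamma_add_one _ hzh]
  have hf1 : k + 1 - (k + 1) = 0 := by omega
  rw [hf1, Nat.factorial_zero, Nat.cast_one]
  have hfn : (((k+1).factorial : ℂ)) ≠ 0 := Nat.cast_ne_zero.mpr (k+1).factorial_ne_zero
  have hkk : ((k : ℂ) + 1) ≠ 0 := by exact_mod_cast Nat.succ_ne_zero k
  have h4 : (4 : ℂ) ≠ 0 := by norm_num
  set g := Complex.Gamma (a + ((k+1 : ℕ) : ℂ) - 1/2) with hgdef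
  set h := Complex.Gamma (a + ((k+1 : ℕ) : ℂ) + (k:ℂ) + 1/2) with hhdef
  have hd' := hd
  have hzh' := hzh
  push_cast at hd' hzh' ⊢
  rw [div_mul_div_comm, ← neg_div, mul_div_assoc']
  rw [div_eq_div_iff (by apply_rules [mul_ne_zero, one_ne_zero, le_refl]) (by apply_rules [mul_ne_zero, one_ne_zero, le_refl])]
  ring

lemma main_aux (a b : ℂ)
    (ha : ∀ m : ℕ, a - 1/2 ≠ -(m : ℂ))
    (hab : ∀ m : ℕ, (a - b) / 2 ≠ -(m : ℂ))
    (hab' : ∀ m : ℕ, (a + b - 1) / 2 ≠ -(m : ℂ)) :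
    ∀ k : ℕ, (∀ n : ℕ, n ≤ k → b * (b - 1) - (a + 2 * n) * (a + 2 * n - 1) ≠ 0) →
    (∑ n ∈ Finset.range (k + 1), tt a b k n)
      = -(1/4) * Complex.Gamma ((a - b) / 2) * Complex.Gamma ((a + b - 1) / 2) /
          (Complex.Gamma ((a - b) / 2 + k + 1) * Complex.Gamma ((a + b + 1) / 2 + k)) := by
  intro k
  induction k with
  | zero =>
    intro hden
    rw [Finset.sum_range_one]
    unfold tt
    have hz1 : a - 1/2 ≠ 0 := by simpa using ha 0
    have hz2 : (a - b)/2 ≠ 0 := by simpa using hab 0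
    have hz3 : (a + b - 1)/2 ≠ 0 := by simpa using hab' 0
    have hg : Complex.Gamma (a - 1/2) ≠ 0 := Complex.Gamma_ne_zero ha
    have hG2 : Complex.Gamma ((a - b)/2) ≠ 0 := Complex.Gamma_ne_zero hab
    have hG3 : Complex.Gamma ((a + b - 1)/2) ≠ 0 := Complex.Gamma_ne_zero hab'
    have hd : b * (b - 1) - (a + 2 * ((0:ℕ) : ℂ)) * (a + 2 * ((0:ℕ) : ℂ) - 1) ≠ 0 :=
      hden 0 le_rfl
    have e0 : a + ((0:ℕ) : ℂ) - 1/2 = a - 1/2 := by push_cast; ring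
    have e1 : a + ((0:ℕ) : ℂ) + ((0:ℕ) : ℂ) + 1/2 = (a - 1/2) + 1 := by push_cast; ring
    have e2 : (a - b)/2 + ((0:ℕ) : ℂ) + 1 = ((a - b)/2) + 1 := by push_cast; ring
    have e3 : (a + b + 1)/2 + ((0:ℕ) : ℂ) = ((a + b - 1)/2) + 1 := by push_cast; ring
    rw [e0, e1, e2, e3, Complex.Gamma_add_one _ hz1, Complex.Gamma_add_one _ hz2,
      Complex.Gamma_add_one _ hz3]
    set d := b * (b - 1) - (a + 2 * ((0:ℕ) : ℂ)) * (a + 2 * ((0:ℕ) : ℂ) - 1) with hddef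
    have hdd : d = b * (b - 1) - a * (a - 1) := by rw [hddef]; push_cast; ring
    simp only [Nat.sub_self, Nat.factorial_zero, Nat.cast_one, pow_zero]
    rw [div_mul_div_comm]
    rw [div_eq_div_iff (by apply_rules [mul_ne_zero, one_ne_zero, le_refl]) (by apply_rules [mul_ne_zero, one_ne_zero, le_refl])]
    rw [hdd]
    push_cast
    ring
  | succ k ih =>
    intro hden
    have hIH := ih (fun n hn => hden n (le_trans hn (Nat.le_succ k)))
    have h5 : (a - b)/2 + (k : ℂ) + 1 ≠ 0 := by
      intro h; apply hab (k+1); push_cast; linear_combination h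
    have h6 : (a + b + 1)/2 + (k : ℂ) ≠ 0 := by
      intro h; apply hab' (k+1); push_cast; linear_combination h
    have hD : ((a - b)/2 + (k : ℂ) + 1) * ((a + b + 1)/2 + (k : ℂ)) ≠ 0 := mul_ne_zero h5 h6
    have key : ((a - b)/2 + (k : ℂ) + 1) * ((a + b + 1)/2 + (k : ℂ)) *
        (∑ n ∈ Finset.range (k + 1 + 1), tt a b (k+1) n)
        = ∑ n ∈ Finset.range (k + 1), tt a b k n := by
      rw [Finset.mul_sum, Finset.sum_range_succ]
      have e1 : ∀ n ∈ Finset.range (k + 1),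
          ((a - b)/2 + (k : ℂ) + 1) * ((a + b + 1)/2 + (k : ℂ)) * tt a b (k+1) n
            = tt a b k n + (gg a k (n+1) - gg a k n) := by
        intro n hn
        exact step_eq a b ha k n (Nat.lt_succ_iff.mp (Finset.mem_range.mp hn))
          (hden n (le_trans (Nat.lt_succ_iff.mp (Finset.mem_range.mp hn)) (Nat.le_succ k)))
      rw [Finset.sum_congr rfl e1, Finset.sum_add_distrib,
        Finset.sum_range_sub (fun n => gg a k n),
        bdry_eq a b ha k (hden (k+1) le_rfl)]
      have hg0 : gg a k 0 = 0 := by simp [gg]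
      rw [hg0]
      ring
    have rstep : -(1/4) * Complex.Gamma ((a - b) / 2) * Complex.Gamma ((a + b - 1) / 2) /
          (Complex.Gamma ((a - b) / 2 + k + 1) * Complex.Gamma ((a + b + 1) / 2 + k))
        = ((a - b)/2 + (k : ℂ) + 1) * ((a + b + 1)/2 + (k : ℂ)) *
          (-(1/4) * Complex.Gamma ((a - b) / 2) * Complex.Gamma ((a + b - 1) / 2) /
          (Complex.Gamma ((a - b) / 2 + ((k+1 : ℕ) : ℂ) + 1) *
            Complex.Gamma ((a + b + 1) / 2 + ((k+1 : ℕ) : ℂ)))) := by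
      have e1 : (a - b)/2 + ((k+1 : ℕ) : ℂ) + 1 = ((a - b)/2 + (k : ℂ) + 1) + 1 := by
        push_cast; ring
      have e2 : (a + b + 1)/2 + ((k+1 : ℕ) : ℂ) = ((a + b + 1)/2 + (k : ℂ)) + 1 := by
        push_cast; ring
      rw [e1, e2, Complex.Gamma_add_one _ h5, Complex.Gamma_add_one _ h6]
      have hga : Complex.Gamma ((a - b)/2 + (k : ℂ) + 1) ≠ 0 := by
        have e : (a - b)/2 + (k : ℂ) + 1 = (a - b)/2 + ((k+1 : ℕ) : ℂ) := by push_cast; ring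
        rw [e]; exact Complex.Gamma_ne_zero (shift_ne _ hab _)
      have hgb : Complex.Gamma ((a + b + 1)/2 + (k : ℂ)) ≠ 0 := by
        have e : (a + b + 1)/2 + (k : ℂ) = (a + b - 1)/2 + ((k+1 : ℕ) : ℂ) := by push_cast; ring
        rw [e]; exact Complex.Gamma_ne_zero (shift_ne _ hab' _)
      rw [mul_div_assoc']
      rw [div_eq_div_iff (by apply_rules [mul_ne_zero, one_ne_zero, le_refl]) (by apply_rules [mul_ne_zero, one_ne_zero, le_refl])]
      ring
    calc (∑ n ∈ Finset.range (k + 1 + 1), tt a b (k+1) n)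
        = (((a - b)/2 + (k : ℂ) + 1) * ((a + b + 1)/2 + (k : ℂ)))⁻¹ *
          (((a - b)/2 + (k : ℂ) + 1) * ((a + b + 1)/2 + (k : ℂ)) *
            (∑ n ∈ Finset.range (k + 1 + 1), tt a b (k+1) n)) := by
          rw [inv_mul_cancel_left₀ hD]
      _ = _ := by
          rw [key, hIH, rstep, inv_mul_cancel_left₀ hD]

/-- The finite sum identity (A.16) with gamma functions. -/
theorem useful_identity (k : ℕ) (a b : ℂ)
    (hden : ∀ n : ℕ, n ≤ k → b * (b - 1) - (a + 2 * n) * (a + 2 * n - 1) ≠ 0)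
    (ha : ∀ m : ℕ, a - 1/2 ≠ -(m : ℂ))
    (hab : ∀ m : ℕ, (a - b) / 2 ≠ -(m : ℂ))
    (hab' : ∀ m : ℕ, (a + b - 1) / 2 ≠ -(m : ℂ)) :
    (∑ n ∈ Finset.range (k + 1),
        (-1 : ℂ) ^ n * Complex.Gamma (a + n - 1/2) /
          ((n.factorial : ℂ) * ((k - n).factorial : ℂ) * Complex.Gamma (a + n + k + 1/2)) *
          ((a + 2 * n - 1/2) / (b * (b - 1) - (a + 2 * n) * (a + 2 * n - 1))))
      = -(1/4) * Complex.Gamma ((a - b) / 2) * Complex.Gamma ((a + b - 1) / 2) /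
          (Complex.Gamma ((a - b) / 2 + k + 1) * Complex.Gamma ((a + b + 1) / 2 + k)) := by
  have := main_aux a b ha hab hab' k hden
  simpa [tt] using this
end
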